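/- Let μ be a probability measure on U(d) and t ≥ 1, and suppose that for every d^t×d^t complex matrix X, ‖∫ U^{⊗t} X (U^†)^{⊗t} dμ(U) − ∫ U^{⊗t} X (U^†)^{⊗t} dμ_H(U)‖_2 ≤ ε ‖X‖_2, where ‖·‖_2 is the Frobenius norm. Then for every k with 1 ≤ k ≤ t and all index tuples p, q, r, s : [k] → [d], the balanced monomial M(U) := ∏_{a=1}^k U_{p_a,q_a} · ∏_{a=1}^k conj(U_{r_a,s_a}) satisfies |∫ M(U) dμ(U) − ∫ M(U) dμ_H(U)| ≤ d^{2t} ε. -/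

import Mathlib

open MeasureTheory
open scoped BigOperators Matrix

/-- Borel measurable-space structure on the unitary group `U(d)`. -/
noncomputable instance unitaryGroup.measurableSpace (d : ℕ) :
    MeasurableSpace (Matrix.unitaryGroup (Fin d) ℂ) := borel _

instance unitaryGroup.borelSpace (d : ℕ) :
    BorelSpace (Matrix.unitaryGroup (Fin d) ℂ) := ⟨rfl⟩

/-- The `t`-fold Kronecker (tensor) power of a `d×d` matrix, indexed by tuples. -/
def tensorPow {d : ℕ} (t : ℕ) (A : Matrix (Fin d) (Fin d) ℂ) :
    Matrix (Fin t → Fin d) (Fin t → Fin d) ℂ :=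
  fun x y => ∏ a : Fin t, A (x a) (y a)

/-- The Frobenius (Hilbert-Schmidt) norm of a matrix. -/
noncomputable def frobNorm {α : Type*} [Fintype α] (M : Matrix α α ℂ) : ℝ :=
  Real.sqrt (∑ x : α, ∑ y : α, ‖M x y‖ ^ 2)

/-- The `t`-th moment superoperator of a measure `ν` on `U(d)`:
`G_{ν,t}(X) = ∫ U^{⊗t} X (U†)^{⊗t} dν(U)`, defined entrywise. -/
noncomputable def momentSuper (d t : ℕ) (ν : Measure (Matrix.unitaryGroup (Fin d) ℂ))
    (X : Matrix (Fin t → Fin d) (Fin t → Fin d) ℂ) :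
    Matrix (Fin t → Fin d) (Fin t → Fin d) ℂ :=
  fun x y =>
    ∫ U : Matrix.unitaryGroup (Fin d) ℂ,
      (tensorPow t (U : Matrix (Fin d) (Fin d) ℂ) * X *
        (tensorPow t (U : Matrix (Fin d) (Fin d) ℂ))ᴴ) x y ∂ν

/-- If `μ` is an `ε`-approximate unitary `t`-design (in `2→2` norm), then every
balanced monomial of degree `k ≤ t` in the entries of `U` and their conjugates has its
`μ`-average within `d^{2t}·ε` of its Haar average. -/
theorem design_implies_monomial_bound (d t : ℕ) (hd : 1 ≤ d) (ht : 1 ≤ t) (ε : ℝ)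
    (μ : Measure (Matrix.unitaryGroup (Fin d) ℂ)) [IsProbabilityMeasure μ]
    (μH : Measure (Matrix.unitaryGroup (Fin d) ℂ))
    [μH.IsHaarMeasure] [IsProbabilityMeasure μH]
    (hdesign : ∀ X : Matrix (Fin t → Fin d) (Fin t → Fin d) ℂ,
      frobNorm (momentSuper d t μ X - momentSuper d t μH X) ≤ ε * frobNorm X) :
    ∀ (k : ℕ), 1 ≤ k → k ≤ t → ∀ p q r s : Fin k → Fin d,
      ‖(∫ U : Matrix.unitaryGroup (Fin d) ℂ,
            (∏ a : Fin k, (U : Matrix (Fin d) (Fin d) ℂ) (p a) (q a)) *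
              (∏ a : Fin k, (starRingEnd ℂ) ((U : Matrix (Fin d) (Fin d) ℂ) (r a) (s a))) ∂μ) -
          (∫ U : Matrix.unitaryGroup (Fin d) ℂ,
            (∏ a : Fin k, (U : Matrix (Fin d) (Fin d) ℂ) (p a) (q a)) *
              (∏ a : Fin k, (starRingEnd ℂ) ((U : Matrix (Fin d) (Fin d) ℂ) (r a) (s a))) ∂μH)‖
        ≤ (d : ℝ) ^ (2 * t) * ε := by
  classical
  have entry_le : ∀ (M : Matrix (Fin t → Fin d) (Fin t → Fin d) ℂ)
      (x y : Fin t → Fin d), ‖M x y‖ ≤ frobNorm M := by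
    intro M x y
    have h1 : ‖M x y‖ ^ 2 ≤ ∑ x' : Fin t → Fin d, ∑ y' : Fin t → Fin d, ‖M x' y'‖ ^ 2 := by
      calc ‖M x y‖ ^ 2 ≤ ∑ y' : Fin t → Fin d, ‖M x y'‖ ^ 2 :=
            Finset.single_le_sum (f := fun y' => ‖M x y'‖ ^ 2)
              (fun _ _ => sq_nonneg _) (Finset.mem_univ y)
        _ ≤ ∑ x' : Fin t → Fin d, ∑ y' : Fin t → Fin d, ‖M x' y'‖ ^ 2 :=
            Finset.single_le_sum (f := fun x' => ∑ y' : Fin t → Fin d, ‖M x' y'‖ ^ 2)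
              (fun i _ => Finset.sum_nonneg fun j _ => sq_nonneg _) (Finset.mem_univ x)
    calc ‖M x y‖ = Real.sqrt (‖M x y‖ ^ 2) := (Real.sqrt_sq (norm_nonneg _)).symm
      _ ≤ frobNorm M := Real.sqrt_le_sqrt h1
  intro k hk hkt p q r s
  set c : Fin d := ⟨0, hd⟩ with hc
  set X : Matrix (Fin t → Fin d) (Fin t → Fin d) ℂ := fun u v =>
    ∏ a : Fin t, (if h : (a : ℕ) < k then
      (if u a = q ⟨a, h⟩ ∧ v a = s ⟨a, h⟩ then (1:ℂ) else 0)
      else (if u a = v a then (1:ℂ) else 0)) with hX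
  set xp : Fin t → Fin d := fun a => if h : (a : ℕ) < k then p ⟨a, h⟩ else c with hxp
  set yr : Fin t → Fin d := fun a => if h : (a : ℕ) < k then r ⟨a, h⟩ else c with hyr
  -- key pointwise identity
  have key : ∀ U : Matrix.unitaryGroup (Fin d) ℂ,
      (tensorPow t (U : Matrix (Fin d) (Fin d) ℂ) * X *
        (tensorPow t (U : Matrix (Fin d) (Fin d) ℂ))ᴴ) xp yr
      = (∏ a : Fin k, (U : Matrix (Fin d) (Fin d) ℂ) (p a) (q a)) *
          (∏ a : Fin k, (starRingEnd ℂ) ((U : Matrix (Fin d) (Fin d) ℂ) (r a) (s a))) := by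
    intro U
    set V : Matrix (Fin d) (Fin d) ℂ := (U : Matrix (Fin d) (Fin d) ℂ) with hV
    have hUnit : V * Vᴴ = 1 := by
      simpa [Matrix.star_eq_conjTranspose] using Matrix.mem_unitaryGroup_iff.mp U.2
    -- the per-index factor
    set F : Fin t → (Fin d × Fin d) → ℂ := fun a ij =>
      V (xp a) ij.1 * (if h : (a : ℕ) < k then
        (if ij.1 = q ⟨a, h⟩ ∧ ij.2 = s ⟨a, h⟩ then (1:ℂ) else 0)
        else (if ij.1 = ij.2 then (1:ℂ) else 0)) *
      (starRingEnd ℂ) (V (yr a) ij.2) with hF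
    have expand : (tensorPow t V * X * (tensorPow t V)ᴴ) xp yr
        = ∑ u : Fin t → Fin d, ∑ v : Fin t → Fin d, ∏ a : Fin t, F a (u a, v a) := by
      simp only [Matrix.mul_apply]
      simp only [Matrix.mul_apply, Matrix.conjTranspose_apply, tensorPow, hX,
        Finset.sum_mul, Finset.mul_sum]
      rw [Finset.sum_comm]
      refine Finset.sum_congr rfl fun u _ => Finset.sum_congr rfl fun v _ => ?_
      rw [star_prod, ← Finset.prod_mul_distrib, ← Finset.prod_mul_distrib]
      rfl
    have combine : (∑ u : Fin t → Fin d, ∑ v : Fin t → Fin d, ∏ a : Fin t, F a (u a, v a))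
        = ∑ w : Fin t → Fin d × Fin d, ∏ a : Fin t, F a (w a) := by
      rw [show (∑ u : Fin t → Fin d, ∑ v : Fin t → Fin d, ∏ a : Fin t, F a (u a, v a))
          = ∑ uv : (Fin t → Fin d) × (Fin t → Fin d), ∏ a : Fin t, F a (uv.1 a, uv.2 a)
        from (Fintype.sum_prod_type
          (f := fun uv : (Fin t → Fin d) × (Fin t → Fin d) => ∏ a : Fin t, F a (uv.1 a, uv.2 a))).symm]
      exact Fintype.sum_equiv (Equiv.arrowProdEquivProdArrow (Fin t) (fun _ => Fin d) (fun _ => Fin d)).symm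
        (fun uv => ∏ a : Fin t, F a (uv.1 a, uv.2 a)) (fun w => ∏ a : Fin t, F a (w a))
        (fun w => rfl)
    have factor : (∑ w : Fin t → Fin d × Fin d, ∏ a : Fin t, F a (w a))
        = ∏ a : Fin t, ∑ ij : Fin d × Fin d, F a ij := (Fintype.prod_sum _).symm
    have eval : ∀ a : Fin t, (∑ ij : Fin d × Fin d, F a ij)
        = if h : (a : ℕ) < k then
            V (p ⟨a, h⟩) (q ⟨a, h⟩) * (starRingEnd ℂ) (V (r ⟨a, h⟩) (s ⟨a, h⟩)) else 1 := by
      intro a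
      by_cases h : (a : ℕ) < k
      · rw [dif_pos h]
        have hx : xp a = p ⟨a, h⟩ := by simp [hxp, dif_pos h]
        have hy : yr a = r ⟨a, h⟩ := by simp [hyr, dif_pos h]
        simp [hF, hx, hy, dif_pos h, Fintype.sum_prod_type, ite_and, mul_ite, ite_mul]
      · rw [dif_neg h]
        have hx : xp a = c := by simp [hxp, dif_neg h]
        have hy : yr a = c := by simp [hyr, dif_neg h]
        have : (∑ ij : Fin d × Fin d, F a ij) = ∑ i : Fin d, V c i * (starRingEnd ℂ) (V c i) := by
          simp [hF, hx, hy, dif_neg h, Fintype.sum_prod_type, mul_ite, ite_mul]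
        rw [this]
        have := congrArg (fun M => M c c) hUnit
        simpa [Matrix.mul_apply, Matrix.conjTranspose_apply, Matrix.one_apply] using this
      -- done
    have split : (∏ a : Fin t, ∑ ij : Fin d × Fin d, F a ij)
        = ∏ a : Fin k, (V (p a) (q a) * (starRingEnd ℂ) (V (r a) (s a))) := by
      rw [Finset.prod_congr rfl (fun a _ => eval a), Fintype.prod_dite]
      let e : Fin k ≃ {a : Fin t // (a : ℕ) < k} :=
        { toFun := fun b => ⟨⟨(b : ℕ), lt_of_lt_of_le b.isLt hkt⟩, b.isLt⟩
          invFun := fun a => ⟨(a : ℕ), a.2⟩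
          left_inv := fun b => rfl
          right_inv := fun a => rfl }
      rw [Finset.prod_const_one, mul_one]
      exact Fintype.prod_equiv e.symm _ _ (fun a => rfl)
    rw [expand, combine, factor, split, Finset.prod_mul_distrib]
  -- rewrite the moment superoperator entries
  have hμ : momentSuper d t μ X xp yr
      = ∫ U : Matrix.unitaryGroup (Fin d) ℂ,
          (∏ a : Fin k, (U : Matrix (Fin d) (Fin d) ℂ) (p a) (q a)) *
            (∏ a : Fin k, (starRingEnd ℂ) ((U : Matrix (Fin d) (Fin d) ℂ) (r a) (s a))) ∂μ := by
    simp only [momentSuper]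
    exact integral_congr_ae (Filter.Eventually.of_forall key)
  have hμH : momentSuper d t μH X xp yr
      = ∫ U : Matrix.unitaryGroup (Fin d) ℂ,
          (∏ a : Fin k, (U : Matrix (Fin d) (Fin d) ℂ) (p a) (q a)) *
            (∏ a : Fin k, (starRingEnd ℂ) ((U : Matrix (Fin d) (Fin d) ℂ) (r a) (s a))) ∂μH := by
    simp only [momentSuper]
    exact integral_congr_ae (Filter.Eventually.of_forall key)
  -- bound entries of X
  have hXentry : ∀ u v : Fin t → Fin d, ‖X u v‖ ≤ 1 := by
    intro u v
    simp only [hX]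
    rw [norm_prod]
    refine Finset.prod_le_one (fun a _ => norm_nonneg _) (fun a _ => ?_)
    split_ifs <;> simp
  have hcard : (Fintype.card (Fin t → Fin d) : ℝ) = (d : ℝ) ^ t := by
    simp [Fintype.card_fun]
  have hfrobX : frobNorm X ≤ (d : ℝ) ^ t := by
    rw [frobNorm]
    have hsum : (∑ x : Fin t → Fin d, ∑ y : Fin t → Fin d, ‖X x y‖ ^ 2)
        ≤ (d : ℝ) ^ t * (d : ℝ) ^ t := by
      calc (∑ x : Fin t → Fin d, ∑ y : Fin t → Fin d, ‖X x y‖ ^ 2)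
          ≤ ∑ _x : Fin t → Fin d, ∑ _y : Fin t → Fin d, (1:ℝ) := by
            refine Finset.sum_le_sum fun x _ => Finset.sum_le_sum fun y _ => ?_
            have := hXentry x y
            nlinarith [norm_nonneg (X x y)]
        _ = (d : ℝ) ^ t * (d : ℝ) ^ t := by simp [hcard]
    calc Real.sqrt (∑ x : Fin t → Fin d, ∑ y : Fin t → Fin d, ‖X x y‖ ^ 2)
        ≤ Real.sqrt ((d : ℝ) ^ t * (d : ℝ) ^ t) := Real.sqrt_le_sqrt hsum
      _ = (d : ℝ) ^ t := by
          rw [show ((d:ℝ) ^ t * (d:ℝ) ^ t) = ((d:ℝ)^t)^2 by ring]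
          exact Real.sqrt_sq (by positivity)
  -- ε ≥ 0
  have hXpos : (1:ℝ) ≤ frobNorm X := by
    have h1 : X (fun a => if h : (a : ℕ) < k then q ⟨a, h⟩ else c)
        (fun a => if h : (a : ℕ) < k then s ⟨a, h⟩ else c) = 1 := by
      simp only [hX]
      refine Finset.prod_eq_one fun a _ => ?_
      by_cases h : (a : ℕ) < k <;> simp [h]
    have := entry_le X (fun a => if h : (a : ℕ) < k then q ⟨a, h⟩ else c)
      (fun a => if h : (a : ℕ) < k then s ⟨a, h⟩ else c)
    rw [h1] at this
    simpa using this
  have hε : 0 ≤ ε := by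
    have h0 : 0 ≤ ε * frobNorm X :=
      le_trans (Real.sqrt_nonneg _) (hdesign X)
    nlinarith
  -- final chain
  have hentry := entry_le (momentSuper d t μ X - momentSuper d t μH X) xp yr
  rw [Matrix.sub_apply, hμ, hμH] at hentry
  refine le_trans hentry (le_trans (hdesign X) ?_)
  have h2 : ε * frobNorm X ≤ ε * ((d : ℝ) ^ t) := by nlinarith
  refine le_trans h2 ?_
  rw [mul_comm]
  refine mul_le_mul_of_nonneg_right ?_ hε
  exact pow_le_pow_right₀ (by exact_mod_cast hd) (by omega)
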